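/- Let R be a commutative ring and 𝔞, 𝔟 ideals of R. Then the product of the integral closures satisfies 𝔞̄ · 𝔟̄ ⊆ (𝔞·𝔟)‾, i.e. the product of an element integral over 𝔞 and an element integral over 𝔟 is integral over 𝔞𝔟. -/

import Mathlib

/-- `x ∈ R` is integral over the ideal `I`: it satisfies a monic equation
`x^m + c₁ x^(m-1) + … + cₘ = 0` with `cⱼ ∈ Iʲ`. -/
def IsIntegralOverIdeal {R : Type*} [CommRing R] (I : Ideal R) (x : R) : Prop :=
  ∃ (m : ℕ) (c : ℕ → R), 0 < m ∧ (∀ j, 1 ≤ j → j ≤ m → c j ∈ I ^ j) ∧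
    x ^ m + ∑ j ∈ Finset.Icc 1 m, c j * x ^ (m - j) = 0

namespace IntegralOverIdealAux

open MvPolynomial Finset

variable {R : Type*} [CommRing R] (I J : Ideal R)

/-- The bigraded "Rees algebra" `R[I·X₀, J·X₁]` inside `R[X₀, X₁]`. -/
noncomputable def adj : Subalgebra R (MvPolynomial (Fin 2) R) :=
  Algebra.adjoin R (((fun a => C a * X 0) '' I) ∪ ((fun b => C b * X 1) '' J))

lemma gen_mem_left {a : R} (ha : a ∈ I) : (C a * X 0 : MvPolynomial (Fin 2) R) ∈ adj I J :=
  Algebra.subset_adjoin (Or.inl ⟨a, ha, rfl⟩)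

lemma gen_mem_right {b : R} (hb : b ∈ J) : (C b * X 1 : MvPolynomial (Fin 2) R) ∈ adj I J :=
  Algebra.subset_adjoin (Or.inr ⟨b, hb, rfl⟩)

lemma pow_mem (K : Ideal R) (k : Fin 2)
    (hgen : ∀ a ∈ K, (C a * X k : MvPolynomial (Fin 2) R) ∈ adj I J) :
    ∀ (j : ℕ) {c : R}, c ∈ K ^ j → (C c * X k ^ j : MvPolynomial (Fin 2) R) ∈ adj I J := by
  intro j
  induction j with
  | zero =>
    intro c _
    simpa using (adj I J).algebraMap_mem c
  | succ n ih =>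
    intro c hc
    rw [pow_succ] at hc
    refine Submodule.mul_induction_on
      (C := fun r => (C r * X k ^ (n + 1) : MvPolynomial (Fin 2) R) ∈ adj I J) hc
      (fun a ha b hb => ?_) (fun p q hp hq => ?_)
    · show (C (a * b) * X k ^ (n + 1) : MvPolynomial (Fin 2) R) ∈ adj I J
      have h : (C (a * b) * X k ^ (n + 1) : MvPolynomial (Fin 2) R)
        = (C a * X k ^ n) * (C b * X k) := by
        rw [C_mul]; ring
      rw [h]
      exact (adj I J).mul_mem (ih ha) (hgen b hb)
    · show (C (p + q) * X k ^ (n + 1) : MvPolynomial (Fin 2) R) ∈ adj I J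
      rw [C_add, add_mul]
      exact (adj I J).add_mem hp hq

lemma coeff_mem {p : MvPolynomial (Fin 2) R} (hp : p ∈ adj I J) :
    ∀ d : Fin 2 →₀ ℕ, coeff d p ∈ I ^ (d 0) * J ^ (d 1) := by
  induction hp using Algebra.adjoin_induction with
  | mem g hg =>
    intro d
    rcases hg with ⟨a, ha, rfl⟩ | ⟨b, hb, rfl⟩
    · rw [coeff_C_mul, coeff_X']
      split_ifs with h
      · subst h
        simpa [Finsupp.single_apply] using ha
      · simp
    · rw [coeff_C_mul, coeff_X']
      split_ifs with h
      · subst h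
        simpa [Finsupp.single_apply] using hb
      · simp
  | algebraMap r =>
    intro d
    rw [algebraMap_eq, coeff_C]
    split_ifs with h
    · rw [← h]
      simp [Ideal.one_eq_top]
    · simp
  | add p q hp hq ihp ihq =>
    intro d
    rw [coeff_add]; exact add_mem (ihp d) (ihq d)
  | mul p q hp hq ihp ihq =>
    intro d
    rw [coeff_mul]
    refine sum_mem fun u hu => ?_
    rw [Finset.HasAntidiagonal.mem_antidiagonal] at hu
    have h0 : u.1 0 + u.2 0 = d 0 := by rw [← hu, Finsupp.add_apply]
    have h1 : u.1 1 + u.2 1 = d 1 := by rw [← hu, Finsupp.add_apply]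
    rw [← h0, ← h1, pow_add, pow_add, mul_mul_mul_comm]
    exact Ideal.mul_mem_mul (ihp u.1) (ihq u.2)

set_option synthInstance.maxHeartbeats 1000000 in
lemma isIntegral_CX (K : Ideal R) (k : Fin 2) {x : R}
    (hgen : ∀ a ∈ K, (C a * X k : MvPolynomial (Fin 2) R) ∈ adj I J)
    (hx : IsIntegralOverIdeal K x) :
    (C x * X k : MvPolynomial (Fin 2) R) ∈
      integralClosure ↥(adj I J) (MvPolynomial (Fin 2) R) := by
  obtain ⟨m, c₀, hm, hc₀, heq₀⟩ := hx
  set c : ℕ → R := fun j => if 1 ≤ j ∧ j ≤ m then c₀ j else 0 with hcdef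
  have hc : ∀ j, c j ∈ K ^ j := by
    intro j
    by_cases h : 1 ≤ j ∧ j ≤ m
    · simpa [hcdef, h] using hc₀ j h.1 h.2
    · simp [hcdef, h]
  have heq : x ^ m + ∑ j ∈ Finset.Icc 1 m, c j * x ^ (m - j) = 0 := by
    rw [Finset.sum_congr rfl fun j hj => ?_]
    · exact heq₀
    · rw [Finset.mem_Icc] at hj
      simp [hcdef, hj.1, hj.2]
  set z : MvPolynomial (Fin 2) R := C x * X k with hzdef
  set P : Polynomial ↥(adj I J) :=
    Polynomial.X ^ m + ∑ j ∈ Finset.Icc 1 m,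
      Polynomial.C (⟨C (c j) * X k ^ j, pow_mem I J K k hgen j (hc j)⟩ : ↥(adj I J)) *
        Polynomial.X ^ (m - j) with hPdef
  have hmonic : P.Monic := by
    refine Polynomial.monic_X_pow_add ?_
    refine lt_of_le_of_lt (Polynomial.degree_sum_le _ _) ?_
    refine Finset.sup_lt_iff (by exact_mod_cast WithBot.bot_lt_coe m) |>.2 fun j hj => ?_
    rw [Finset.mem_Icc] at hj
    refine lt_of_le_of_lt (Polynomial.degree_C_mul_X_pow_le _ _) ?_
    exact_mod_cast (by omega : m - j < m)
  refine (mem_integralClosure_iff _ _).mpr ⟨P, hmonic, ?_⟩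
  have hzpow : ∀ n : ℕ, z ^ n = C (x ^ n) * X k ^ n := by
    intro n; rw [hzdef, mul_pow, ← map_pow]
  rw [← Polynomial.aeval_def, hPdef]
  simp only [map_add, map_pow, map_sum, map_mul, Polynomial.aeval_X, Polynomial.aeval_C]
  have hterm : ∀ j ∈ Finset.Icc 1 m,
      algebraMap ↥(adj I J) (MvPolynomial (Fin 2) R)
          (⟨C (c j) * X k ^ j, pow_mem I J K k hgen j (hc j)⟩ : ↥(adj I J)) * z ^ (m - j)
        = C (c j * x ^ (m - j)) * X k ^ m := by
    intro j hj
    rw [Finset.mem_Icc] at hj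
    have halg : algebraMap ↥(adj I J) (MvPolynomial (Fin 2) R)
        (⟨C (c j) * X k ^ j, pow_mem I J K k hgen j (hc j)⟩ : ↥(adj I J))
        = C (c j) * X k ^ j := rfl
    rw [halg, hzpow, mul_mul_mul_comm, ← C_mul, ← pow_add,
      (by omega : j + (m - j) = m)]
  rw [Finset.sum_congr rfl hterm, ← Finset.sum_mul, ← map_sum, hzpow, ← add_mul, ← map_add,
    heq, map_zero, zero_mul]

/-- bidegree `(n, n)` exponent. -/
noncomputable def e (n : ℕ) : Fin 2 →₀ ℕ := Finsupp.single 0 n + Finsupp.single 1 n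

lemma e_add (a b : ℕ) : e a + e b = e (a + b) := by
  simp only [e]
  rw [add_add_add_comm, ← Finsupp.single_add, ← Finsupp.single_add]

lemma e_apply_zero (n : ℕ) : e n 0 = n := by simp [e]

lemma e_apply_one (n : ℕ) : e n 1 = n := by simp [e]

lemma e_zero : e 0 = 0 := by simp [e]

end IntegralOverIdealAux

open MvPolynomial Finset IntegralOverIdealAux in
/-- The product of an element integral over `I` with an element integral over `J` is
integral over `I * J`; i.e., `Ī · J̄ ⊆ (I·J)‾`. -/
theorem mul_mem_integralClosure_mul {R : Type*} [CommRing R] (I J : Ideal R) (x y : R)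
    (hx : IsIntegralOverIdeal I x) (hy : IsIntegralOverIdeal J y) :
    IsIntegralOverIdeal (I * J) (x * y) := by
  rcases subsingleton_or_nontrivial R with hR | hR
  · exact ⟨1, 0, one_pos, by simp, Subsingleton.elim _ _⟩
  set A := adj I J with hAdef
  haveI : Nontrivial ↥A :=
    ⟨⟨1, 0, fun h => one_ne_zero (α := MvPolynomial (Fin 2) R) (congrArg Subtype.val h)⟩⟩
  set z : MvPolynomial (Fin 2) R := (C x * X 0) * (C y * X 1) with hzdef
  have hzint : z ∈ integralClosure ↥A (MvPolynomial (Fin 2) R) :=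
    mul_mem (isIntegral_CX I J I 0 (fun a ha => gen_mem_left I J ha) hx)
      (isIntegral_CX I J J 1 (fun b hb => gen_mem_right I J hb) hy)
  obtain ⟨P, hPmonic, hPeval⟩ := hzint
  set Q : Polynomial ↥A := P * Polynomial.X with hQdef
  have hQmonic : Q.Monic := hPmonic.mul Polynomial.monic_X
  set N := Q.natDegree with hNdef
  have hN : 1 ≤ N := by
    rw [hNdef, hQdef, Polynomial.natDegree_mul_X hPmonic.ne_zero]
    omega
  have hQeval : Polynomial.aeval z Q = 0 := by
    have hP : Polynomial.aeval z P = 0 := by rw [Polynomial.aeval_def]; exact hPeval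
    rw [hQdef, map_mul, Polynomial.aeval_X, hP, zero_mul]
  have hzpow : ∀ i : ℕ, z ^ i = monomial (e i) ((x * y) ^ i) := by
    intro i
    have hX : ∀ k : Fin 2, (X k : MvPolynomial (Fin 2) R) = monomial (Finsupp.single k 1) 1 :=
      fun k => by rw [← pow_one (X k), X_pow_eq_monomial]
    have h1 : z = monomial (e 1) (x * y) := by
      rw [hzdef, hX 0, hX 1, C_mul_monomial, C_mul_monomial, monomial_mul, mul_one, mul_one, e]
    rw [h1, monomial_pow]
    congr 1
    simp only [e, smul_add, Finsupp.smul_single, smul_eq_mul, mul_one]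
  have hsum : (0 : MvPolynomial (Fin 2) R)
      = ∑ i ∈ range (N + 1), ((Q.coeff i : ↥A) : MvPolynomial (Fin 2) R) * z ^ i := by
    rw [← hQeval, Polynomial.aeval_eq_sum_range]
    exact Finset.sum_congr rfl fun i _ => Algebra.smul_def _ _
  have hcoeff := congrArg (coeff (e N)) hsum
  rw [coeff_zero, coeff_sum] at hcoeff
  have hterm : ∀ i ∈ range (N + 1),
      coeff (e N) (((Q.coeff i : ↥A) : MvPolynomial (Fin 2) R) * z ^ i)
        = coeff (e (N - i)) ((Q.coeff i : ↥A) : MvPolynomial (Fin 2) R) * (x * y) ^ i := by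
    intro i hi
    rw [Finset.mem_range] at hi
    rw [hzpow, show e N = e (N - i) + e i from by rw [e_add]; congr 1; omega,
      coeff_mul_monomial]
  rw [Finset.sum_congr rfl hterm, Finset.sum_range_succ] at hcoeff
  have htop : coeff (e (N - N)) ((Q.coeff N : ↥A) : MvPolynomial (Fin 2) R) * (x * y) ^ N
      = (x * y) ^ N := by
    rw [hQmonic.coeff_natDegree]
    simp [Nat.sub_self, e_zero]
  rw [htop] at hcoeff
  refine ⟨N, fun j => coeff (e j) ((Q.coeff (N - j) : ↥A) : MvPolynomial (Fin 2) R), hN,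
    fun j _ _ => ?_, ?_⟩
  · have h := coeff_mem I J (Q.coeff (N - j)).2 (e j)
    rw [e_apply_zero, e_apply_one] at h
    rw [mul_pow]
    exact h
  · have hb : ∑ i ∈ range N,
        coeff (e (N - i)) ((Q.coeff i : ↥A) : MvPolynomial (Fin 2) R) * (x * y) ^ i
        = ∑ j ∈ Finset.Icc 1 N,
            coeff (e j) ((Q.coeff (N - j) : ↥A) : MvPolynomial (Fin 2) R) * (x * y) ^ (N - j) := by
      refine Finset.sum_nbij' (fun i => N - i) (fun j => N - j) ?_ ?_ ?_ ?_ ?_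
      · intro a ha; rw [Finset.mem_range] at ha; rw [Finset.mem_Icc]; omega
      · intro a ha; rw [Finset.mem_Icc] at ha; rw [Finset.mem_range]; omega
      · intro a ha; rw [Finset.mem_range] at ha; omega
      · intro a ha; rw [Finset.mem_Icc] at ha; omega
      · intro a ha
        rw [Finset.mem_range] at ha
        rw [show N - (N - a) = a from by omega]
    rw [← hb, add_comm]
    exact hcoeff.symm
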